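/- Fix l ≥ 1 and a strictly decreasing integer tuple n ∈ ℤ^l. For every R > 1 there exists a constant C(R) > 0 such that ∑_{k} |f_{k,n}(x)|² < C(R) for every x ∈ [0, R], where the sum ranges over all strictly decreasing tuples k ∈ ℤ^l. In particular, for each fixed x ≥ 0 the family (f_{k,n}(x))_k is square-summable. -/

import Mathlib

/-- The modified Bessel function of the first kind `I_j(x)`, `j ∈ ℤ`,
defined by its power series (extended to negative indices by `I_{-j} = I_j`). -/
noncomputable def besselI (j : ℤ) (x : ℝ) : ℝ :=
  ∑' s : ℕ, (x / 2) ^ (j.natAbs + 2 * s) /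
    ((Nat.factorial s : ℝ) * (Nat.factorial (j.natAbs + s) : ℝ))

/-- The determinant `f_{k,n}(x) = det (I_{k_j - n_i}(x))_{i,j}`. -/
noncomputable def fdet (l : ℕ) (k n : Fin l → ℤ) (x : ℝ) : ℝ :=
  Matrix.det (fun i j : Fin l => besselI (k j - n i) x)

open scoped Nat
set_option maxHeartbeats 1000000

private lemma term_le {x R : ℝ} (hx : 0 ≤ x) (hxR : x ≤ R) (a s : ℕ) :
    (x / 2) ^ (a + 2 * s) / ((s ! : ℝ) * ((a + s)! : ℝ)) ≤
      ((R / 2) ^ a / (a ! : ℝ)) * ((R ^ 2 / 4) ^ s / (s ! : ℝ)) := by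
  have hR : (0:ℝ) ≤ R := le_trans hx hxR
  have h1 : (x/2) ^ (a + 2*s) ≤ (R/2) ^ (a + 2*s) :=
    pow_le_pow_left₀ (by linarith) (by linarith) _
  have h2 : (a ! : ℝ) * (s ! : ℝ) ≤ (s ! : ℝ) * ((a+s)! : ℝ) := by
    rw [mul_comm]
    exact mul_le_mul_of_nonneg_left
      (by exact_mod_cast Nat.factorial_le (Nat.le_add_right a s)) (by positivity)
  calc (x/2) ^ (a + 2*s) / ((s ! : ℝ) * ((a+s)! : ℝ))
      ≤ (R/2) ^ (a + 2*s) / ((a ! : ℝ) * (s ! : ℝ)) := by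
        apply div_le_div₀ (by positivity) h1 (by positivity) h2
    _ = ((R / 2) ^ a / (a ! : ℝ)) * ((R ^ 2 / 4) ^ s / (s ! : ℝ)) := by
        rw [div_mul_div_comm, pow_add, pow_mul]
        congr 2
        ring

private lemma term_nonneg {x : ℝ} (hx : 0 ≤ x) (a s : ℕ) :
    0 ≤ (x / 2) ^ (a + 2 * s) / ((s ! : ℝ) * ((a + s)! : ℝ)) := by positivity

private lemma summable_term {x : ℝ} (hx : 0 ≤ x) (a : ℕ) :
    Summable (fun s : ℕ => (x / 2) ^ (a + 2 * s) / ((s ! : ℝ) * ((a + s)! : ℝ))) := by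
  refine Summable.of_nonneg_of_le (fun s => term_nonneg hx a s) (fun s => term_le hx le_rfl a s) ?_
  exact ((Real.summable_pow_div_factorial (x^2/4)).mul_left _)

private lemma besselI_abs_le {j : ℤ} {x R : ℝ} (hx : 0 ≤ x) (hxR : x ≤ R) :
    |besselI j x| ≤ Real.exp (R ^ 2 / 4) * ((R / 2) ^ j.natAbs / (j.natAbs ! : ℝ)) := by
  have hR : (0:ℝ) ≤ R := le_trans hx hxR
  set a := j.natAbs
  have h0 : 0 ≤ besselI j x := tsum_nonneg (fun s => term_nonneg hx a s)
  rw [abs_of_nonneg h0]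
  have hsum2 : Summable (fun s : ℕ => ((R / 2) ^ a / (a ! : ℝ)) * ((R ^ 2 / 4) ^ s / (s ! : ℝ))) :=
    (Real.summable_pow_div_factorial (R^2/4)).mul_left _
  have h1 : besselI j x ≤ ∑' s : ℕ, ((R / 2) ^ a / (a ! : ℝ)) * ((R ^ 2 / 4) ^ s / (s ! : ℝ)) :=
    Summable.tsum_le_tsum (fun s => term_le hx hxR a s) (summable_term hx a) hsum2
  refine h1.trans ?_
  rw [tsum_mul_left, mul_comm]
  apply mul_le_mul_of_nonneg_right ?_ (by positivity)
  exact Summable.tsum_le_of_sum_range_le ((Real.summable_pow_div_factorial (R^2/4)))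
    (fun n => Real.sum_le_exp_of_nonneg (by positivity) n)

private lemma summable_pi_prod {l : ℕ} {h : ℤ → ℝ} (h0 : ∀ m, 0 ≤ h m) (hs : Summable h) :
    Summable (fun k : Fin l → ℤ => ∏ j, h (k j)) := by
  induction l with
  | zero =>
      simp only [Finset.univ_eq_empty, Finset.prod_empty]
      exact (hasSum_fintype _).summable
  | succ l ih =>
      rw [← (Fin.consEquiv (fun _ : Fin (l+1) => ℤ)).summable_iff]
      have : ((fun k : Fin (l+1) → ℤ => ∏ j, h (k j)) ∘ (Fin.consEquiv (fun _ => ℤ)))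
          = fun p : ℤ × (Fin l → ℤ) => h p.1 * ∏ j, h (p.2 j) := by
        funext p
        simp [Fin.consEquiv, Fin.prod_univ_succ]
      rw [this]
      have hf : 0 ≤ h := h0
      have hg : 0 ≤ (fun k : Fin l → ℤ => ∏ j, h (k j)) :=
        fun k => Finset.prod_nonneg fun j _ => h0 _
      have key := Summable.mul_of_nonneg hs ih hf hg
      exact key

private lemma det_abs_le {l : ℕ} (M : Matrix (Fin l) (Fin l) ℝ) (h : Fin l → ℝ)
    (h0 : ∀ j, 0 ≤ h j) (hb : ∀ i j, |M i j| ≤ h j) :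
    |M.det| ≤ (l ! : ℝ) * ∏ j, h j := by
  rw [Matrix.det_apply']
  refine (Finset.abs_sum_le_sum_abs _ _).trans ?_
  have hcard : (Finset.univ : Finset (Equiv.Perm (Fin l))).card = l ! := by
    simp [Fintype.card_perm]
  calc ∑ σ : Equiv.Perm (Fin l), |(Equiv.Perm.sign σ : ℝ) * ∏ i, M (σ i) i|
      ≤ ∑ σ : Equiv.Perm (Fin l), ∏ j, h j := by
        refine Finset.sum_le_sum fun σ _ => ?_
        rw [abs_mul]
        have hsign : |(Equiv.Perm.sign σ : ℝ)| = 1 := by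
          rcases Int.units_eq_one_or (Equiv.Perm.sign σ) with hs | hs <;> simp [hs]
        rw [hsign, one_mul, Finset.abs_prod]
        exact Finset.prod_le_prod (fun j _ => abs_nonneg _) (fun j _ => hb _ _)
    _ = (l ! : ℝ) * ∏ j, h j := by
        rw [Finset.sum_const, hcard, nsmul_eq_mul]

private lemma summable_shift (r : ℝ) (t : ℤ) :
    Summable (fun m : ℤ => r ^ (m - t).natAbs / (((m - t).natAbs)! : ℝ)) := by
  have hg : Summable (fun m : ℤ => r ^ m.natAbs / ((m.natAbs)! : ℝ)) := by
    apply Summable.of_nat_of_neg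
    · simpa using Real.summable_pow_div_factorial r
    · simpa using Real.summable_pow_div_factorial r
  have := (Equiv.subRight t).summable_iff.mpr hg
  simpa [Function.comp_def] using this


/-- For every `R > 1` there is `C(R) > 0` with `∑_k |f_{k,n}(x)|² < C(R)` for all
`x ∈ [0,R]`, the sum ranging over strictly decreasing `k ∈ ℤ^l`; in particular, for
each `x ≥ 0` the family `(f_{k,n}(x))_k` is square-summable. -/
theorem fdet_sq_summable (l : ℕ) (hl : 1 ≤ l) (n : Fin l → ℤ) (hn : StrictAnti n)
    (R : ℝ) (hR : 1 < R) :
    ∃ C : ℝ, 0 < C ∧ ∀ x : ℝ, 0 ≤ x → x ≤ R →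
      Summable (fun k : {k : Fin l → ℤ // StrictAnti k} => (fdet l k.1 n x) ^ 2) ∧
      ∑' k : {k : Fin l → ℤ // StrictAnti k}, (fdet l k.1 n x) ^ 2 < C := by
  classical
  have hR0 : (0:ℝ) ≤ R := by linarith
  set c0 := Real.exp (R ^ 2 / 4) with hc0
  have hc0pos : 0 < c0 := Real.exp_pos _
  set B : ℕ → ℝ := fun a => c0 * ((R / 2) ^ a / (a ! : ℝ)) with hB
  have hB0 : ∀ a, 0 ≤ B a := by
    intro a
    have : (0:ℝ) ≤ (R / 2) ^ a / (a ! : ℝ) := by positivity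
    exact mul_nonneg hc0pos.le this
  set h : ℤ → ℝ := fun m => ∑ i : Fin l, B (m - n i).natAbs with hh
  have hh0 : ∀ m, 0 ≤ h m := fun m => Finset.sum_nonneg fun i _ => hB0 _
  have hhs : Summable h := by
    apply summable_sum
    intro i _
    have := (summable_shift (R / 2) (n i)).mul_left c0
    simpa [hB] using this
  have hBle : ∀ a, B a ≤ c0 * Real.exp (R / 2) := by
    intro a
    have h1 := Real.sum_le_exp_of_nonneg (x := R / 2) (by linarith) (a + 1)
    have h2 : (R / 2) ^ a / (a ! : ℝ) ≤ ∑ i ∈ Finset.range (a + 1), (R / 2) ^ i / (i ! : ℝ) :=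
      Finset.single_le_sum (f := fun i => (R / 2) ^ i / (i ! : ℝ))
        (fun i _ => by positivity) (Finset.self_mem_range_succ a)
    exact mul_le_mul_of_nonneg_left (h2.trans h1) hc0pos.le
  have hMb : ∀ m, h m ≤ (l : ℝ) * (c0 * Real.exp (R / 2)) := by
    intro m
    calc h m ≤ ∑ _i : Fin l, c0 * Real.exp (R / 2) :=
          Finset.sum_le_sum fun i _ => hBle _
      _ = (l : ℝ) * (c0 * Real.exp (R / 2)) := by
          simp [Finset.sum_const, mul_comm]
  have hsq : Summable (fun m : ℤ => (h m) ^ 2) := by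
    refine Summable.of_nonneg_of_le (fun m => sq_nonneg _) (fun m => ?_)
      (hhs.mul_left ((l : ℝ) * (c0 * Real.exp (R / 2))))
    have := hMb m
    have h0 := hh0 m
    nlinarith
  have hpi : Summable (fun k : Fin l → ℤ => ∏ j, (h (k j)) ^ 2) := by
    have key := summable_pi_prod (l := l) (h := fun m => (h m) ^ 2)
      (fun m => sq_nonneg _) hsq
    exact key
  have hpi2 : Summable (fun k : Fin l → ℤ => (l ! : ℝ) ^ 2 * ∏ j, (h (k j)) ^ 2) :=
    hpi.mul_left _
  set T := ∑' k : Fin l → ℤ, ∏ j, (h (k j)) ^ 2 with hT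
  have hT0 : 0 ≤ T := tsum_nonneg fun k => Finset.prod_nonneg fun j _ => sq_nonneg _
  refine ⟨(l ! : ℝ) ^ 2 * T + 1, by positivity, ?_⟩
  intro x hx hxR
  have key : ∀ k : Fin l → ℤ, (fdet l k n x) ^ 2 ≤ (l ! : ℝ) ^ 2 * ∏ j, (h (k j)) ^ 2 := by
    intro k
    have hd : |fdet l k n x| ≤ (l ! : ℝ) * ∏ j, h (k j) := by
      have := det_abs_le (fun i j : Fin l => besselI (k j - n i) x) (fun j => h (k j))
        (fun j => hh0 _) ?_
      · exact this
      · intro i j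
        refine (besselI_abs_le hx hxR).trans ?_
        exact Finset.single_le_sum (f := fun i' => B (k j - n i').natAbs)
          (fun i' _ => hB0 _) (Finset.mem_univ i)
    have h2 : (fdet l k n x) ^ 2 = |fdet l k n x| ^ 2 := (sq_abs _).symm
    rw [h2]
    calc |fdet l k n x| ^ 2 ≤ ((l ! : ℝ) * ∏ j, h (k j)) ^ 2 :=
        pow_le_pow_left₀ (abs_nonneg _) hd 2
      _ = (l ! : ℝ) ^ 2 * ∏ j, (h (k j)) ^ 2 := by
        rw [mul_pow, ← Finset.prod_pow]
  have hdom : Summable (fun k : {k : Fin l → ℤ // StrictAnti k} =>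
      (l ! : ℝ) ^ 2 * ∏ j, (h (k.1 j)) ^ 2) :=
    hpi2.comp_injective Subtype.val_injective
  have hsummable : Summable (fun k : {k : Fin l → ℤ // StrictAnti k} => (fdet l k.1 n x) ^ 2) :=
    Summable.of_nonneg_of_le (fun k => sq_nonneg _) (fun k => key k.1) hdom
  refine ⟨hsummable, ?_⟩
  have hle : ∑' k : {k : Fin l → ℤ // StrictAnti k}, (fdet l k.1 n x) ^ 2
      ≤ ∑' k : {k : Fin l → ℤ // StrictAnti k}, (l ! : ℝ) ^ 2 * ∏ j, (h (k.1 j)) ^ 2 :=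
    Summable.tsum_le_tsum (fun k => key k.1) hsummable hdom
  have hle2 : ∑' k : {k : Fin l → ℤ // StrictAnti k}, (l ! : ℝ) ^ 2 * ∏ j, (h (k.1 j)) ^ 2
      ≤ ∑' k : Fin l → ℤ, (l ! : ℝ) ^ 2 * ∏ j, (h (k j)) ^ 2 :=
    Summable.tsum_subtype_le (fun k : Fin l → ℤ => (l ! : ℝ) ^ 2 * ∏ j, (h (k j)) ^ 2)
      {k : Fin l → ℤ | StrictAnti k}
      (fun k => mul_nonneg (by positivity) (Finset.prod_nonneg fun j _ => sq_nonneg _)) hpi2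
  have heq : ∑' k : Fin l → ℤ, (l ! : ℝ) ^ 2 * ∏ j, (h (k j)) ^ 2 = (l ! : ℝ) ^ 2 * T :=
    tsum_mul_left
  linarith
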